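/- Let w be a word of length n over a finite ordered alphabet Σ, let 1 ≤ i ≤ n+1, and let C be a cycle of σ_i (the standard permutation of dol(w,i)) with i ∉ [min C, max C] (a bad cycle with respect to i). Then: if i < min C, no position j ≤ i is nice for w; and if i > max C, no position j ≥ i is nice for w. -/

import Mathlib

namespace DollarBWT

/-- The list of all rotations of a word. -/
def rotations {α : Type*} (v : List α) : List (List α) :=
  (List.range v.length).map fun k => v.rotate k

/-- The Burrows–Wheeler transform of a word `v`: sort (stably) the multiset of all
rotations of `v` lexicographically and take the last character of each rotation. -/
def bwt {α : Type*} [LinearOrder α] (v : List α) : List α :=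
  ((rotations v).insertionSort (· ≤ ·)).filterMap List.getLast?

/-- `dol w i` inserts the sentinel `⊥` (playing the role of `$`, smaller than every
letter of the alphabet) at (1-based) position `i` of the word `w`. -/
def dol {α : Type*} [LinearOrder α] (w : List α) (i : ℕ) : List (WithBot α) :=
  (w.map (fun a => (a : WithBot α))).insertIdx (i - 1) ⊥

/-- Position `i` (1-based, `1 ≤ i ≤ |w|+1`) is *nice* for `w` if there is a word `v`
of the same length as `w` with `BWT(v$) = dol(w,i)`. -/
def Nice {α : Type*} [LinearOrder α] (w : List α) (i : ℕ) : Prop :=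
  ∃ v : List α, v.length = w.length ∧
    bwt (v.map (fun a => (a : WithBot α)) ++ [(⊥ : WithBot α)]) = dol w i

/-- `σ` (a permutation of `Fin n`, thought of as the positions `1,…,n` of `w`) is the
standard permutation of the word `w`. -/
def IsStdPerm {α : Type*} [LinearOrder α] {n : ℕ} (w : List α)
    (σ : Equiv.Perm (Fin n)) : Prop :=
  ∃ h : w.length = n, ∀ i j : Fin n,
    σ i < σ j ↔ (w.get (Fin.cast h.symm i) < w.get (Fin.cast h.symm j)
      ∨ (w.get (Fin.cast h.symm i) = w.get (Fin.cast h.symm j) ∧ i < j))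

/-- Application of a permutation of `Fin n` in 1-based terms: `ap σ k` is the image of
`k ∈ {1,…,n}` under `σ` read as a permutation of `{1,…,n}` (junk: `k` outside). -/
def ap {n : ℕ} (σ : Equiv.Perm (Fin n)) (k : ℕ) : ℕ :=
  if h : 1 ≤ k ∧ k ≤ n then ((σ ⟨k - 1, by omega⟩ : Fin n) : ℕ) + 1 else k

/-- `C` is a cycle of the permutation `σ`: a minimal non-empty subset with `σ(C) = C`. -/
def IsCycleOf {β : Type*} (σ : Equiv.Perm β) (C : Set β) : Prop :=
  C.Nonempty ∧ σ '' C = C ∧ ∀ D : Set β, D.Nonempty → D ⊆ C → σ '' D = D → D = C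

/-- The number of cycles in the cycle decomposition of `σ` (fixpoints count as cycles). -/
noncomputable def numCycles {β : Type*} (σ : Equiv.Perm β) : ℕ :=
  {C : Set β | IsCycleOf σ C}.ncard

/-- A permutation is cyclic if its cycle decomposition consists of a single cycle,
i.e. the whole domain is one cycle. -/
def PermCyclic {β : Type*} (σ : Equiv.Perm β) : Prop :=
  IsCycleOf σ (Set.univ : Set β)

/-- `C ⊆ {1,…,n}` (in 1-based terms) is a cycle of `σ`. -/
def IsCycleSet1 {n : ℕ} (σ : Equiv.Perm (Fin n)) (C : Set ℕ) : Prop :=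
  ∃ C' : Set (Fin n), IsCycleOf σ C' ∧ C = (fun x : Fin n => (x : ℕ) + 1) '' C'

/-- A word is primitive if it is not a proper power. -/
def Primitive {α : Type*} (v : List α) : Prop :=
  ∀ (u : List α) (k : ℕ), v = (List.replicate k u).flatten → k = 1

/-- `σ` equals the product of the cycles given (in 1-based terms) by the lists in `Ls`:
the lists are disjoint, consist of elements of `{1,…,n}`, `σ` maps each entry of each
list to the (cyclically) next one, and fixes everything else. -/
def IsCyclesProd {n : ℕ} (σ : Equiv.Perm (Fin n)) (Ls : List (List ℕ)) : Prop :=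
  Ls.flatten.Nodup ∧ (∀ L ∈ Ls, L ≠ []) ∧ (∀ x ∈ Ls.flatten, 1 ≤ x ∧ x ≤ n) ∧
  (∀ L ∈ Ls, ∀ (t : ℕ) (ht : t < L.length),
      ap σ (L.get ⟨t, ht⟩) = L.get ⟨(t + 1) % L.length, Nat.mod_lt _ (by omega)⟩) ∧
  (∀ x : ℕ, 1 ≤ x → x ≤ n → x ∉ Ls.flatten → ap σ x = x)

/-- `S ⊆ {1,…,n}` (1-based) is a pseudo-cycle of `σ` witnessed by the partition
`S = Sl ∪ Sr` with `Sl < Sr` and `σ(S) = (Sl − 1) ∪ Sr`. -/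
def IsPseudoCycleWith {n : ℕ} (σ : Equiv.Perm (Fin n)) (S Sl Sr : Set ℕ) : Prop :=
  S.Nonempty ∧ S ⊆ Set.Icc 1 n ∧ Sl ∪ Sr = S ∧ Disjoint Sl Sr ∧
    (∀ x ∈ Sl, ∀ y ∈ Sr, x < y) ∧
    ap σ '' S = ((fun x => x - 1) '' Sl) ∪ Sr

/-- The critical interval `[a+1, b]` of a pseudo-cycle with partition `Sl, Sr`,
where `a = max Sl` (`0` if `Sl = ∅`) and `b = min Sr` (`n+1` if `Sr = ∅`). -/
noncomputable def criticalInterval (n : ℕ) (Sl Sr : Set ℕ) : Set ℕ :=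
  Set.Icc (sSup Sl + 1) (sInf (insert (n + 1) Sr))

/-- `unshift(U, i) = { x ∈ U : x < i } ∪ { x − 1 : x ∈ U, x > i }`. -/
def unshift (U : Set ℕ) (i : ℕ) : Set ℕ :=
  {x | x ∈ U ∧ x < i} ∪ (fun x => x - 1) '' {x | x ∈ U ∧ i < x}

/-- The number of nice positions of `w`. -/
noncomputable def niceCount {α : Type*} [LinearOrder α] (w : List α) : ℕ :=
  {i : ℕ | 1 ≤ i ∧ i ≤ w.length + 1 ∧ Nice w i}.ncard

/-- `L`, the maximum over all cycles `C` of `σ` of the (1-based) minimum of `C`. -/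
noncomputable def Lval {n : ℕ} (σ : Equiv.Perm (Fin n)) : ℕ :=
  sSup ((fun C : Set (Fin n) => sInf ((fun x : Fin n => (x : ℕ) + 1) '' C)) ''
    {C | IsCycleOf σ C})

/-- The number of bad pairs of `σ`: cycles `C` which are not the cycle with the largest
minimum and such that `min C + 1 ∈ C` (all in 1-based terms). -/
noncomputable def badPairCount {n : ℕ} (σ : Equiv.Perm (Fin n)) : ℕ :=
  {C : Set (Fin n) | IsCycleOf σ C ∧
    sInf ((fun x : Fin n => (x : ℕ) + 1) '' C) < Lval σ ∧
    sInf ((fun x : Fin n => (x : ℕ) + 1) '' C) + 1 ∈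
      (fun x : Fin n => (x : ℕ) + 1) '' C}.ncard

/-! ### Auxiliary material for Statement 18 -/

section Statement18Aux

open List

variable {β : Type*} [LinearOrder β]

/-- index congruence for `getElem`. -/
private lemma getElem_idx_eq {γ : Type*} {l : List γ} {i j : ℕ} (h : i = j)
    (hi : i < l.length) : l[i]'hi = l[j]'(h ▸ hi) := by subst h; rfl

/-! #### Lexicographic facts -/

private lemma lex_append_singleton (c : β) : ∀ (X Y : List β), X.length = Y.length →
    List.Lex (· < ·) X Y → List.Lex (· < ·) (X ++ [c]) (Y ++ [c]) := by
  intro X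
  induction X with
  | nil =>
    intro Y hlen h
    cases h
    simp at hlen
  | cons a as ih =>
    intro Y hlen h
    cases h with
    | rel hr => exact List.Lex.rel hr
    | cons ht => exact List.Lex.cons (ih _ (by simpa using hlen) ht)

private lemma lex_of_append_singleton {c : β} {X Y : List β} (hlen : X.length = Y.length)
    (h : List.Lex (· < ·) (X ++ [c]) (Y ++ [c])) : List.Lex (· < ·) X Y := by
  rcases eq_or_ne X Y with rfl | hne
  · exact absurd h (by exact lt_irrefl (X ++ [c]))
  · rcases lt_or_gt_of_ne hne with hxy | hyx
    · exact hxy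
    · exact absurd (lex_append_singleton c Y X hlen.symm hyx)
        (by exact lt_asymm (show X ++ [c] < Y ++ [c] from h))

/-! #### Rotations -/

private lemma length_rotations {γ : Type*} (u : List γ) : (rotations u).length = u.length := by
  simp [rotations]

private lemma rotate_mem_rotations {γ : Type*} (u : List γ) (hu : u ≠ []) (k : ℕ) :
    u.rotate k ∈ rotations u := by
  have h0 : 0 < u.length := List.length_pos_iff.2 hu
  rw [← List.rotate_mod]
  exact List.mem_map.2 ⟨k % u.length, List.mem_range.2 (Nat.mod_lt _ h0), rfl⟩

private lemma exists_rotate_of_mem {γ : Type*} {u z : List γ} (h : z ∈ rotations u) :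
    ∃ k < u.length, z = u.rotate k := by
  obtain ⟨k, hk, rfl⟩ := List.mem_map.1 h
  exact ⟨k, List.mem_range.1 hk, rfl⟩

private lemma indexOf_append_cons {γ : Type*} [DecidableEq γ] {c : γ} :
    ∀ (l₁ l₂ : List γ), c ∉ l₁ → (l₁ ++ c :: l₂).idxOf c = l₁.length := by
  intro l₁
  induction l₁ with
  | nil => simp
  | cons a l ih =>
    intro l₂ hc
    simp only [List.mem_cons, not_or] at hc
    rw [List.cons_append, List.idxOf_cons_ne _ (fun h => hc.1 h.symm), ih l₂ hc.2]
    rfl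

private lemma rotate_sentinel {γ : Type*} (v' : List γ) (c : γ) {k : ℕ} (hk : k ≤ v'.length) :
    (v' ++ [c]).rotate k = v'.drop k ++ c :: v'.take k := by
  rw [List.rotate_eq_drop_append_take (by simp; omega),
    List.drop_append_of_le_length hk, List.take_append_of_le_length hk]
  simp

private lemma rotations_nodup_of_sentinel {γ : Type*} [DecidableEq γ] (v' : List γ) (c : γ)
    (hc : c ∉ v') : (rotations (v' ++ [c])).Nodup := by
  apply List.Nodup.map_on ?_ List.nodup_range
  intro x hx y hy hxy
  simp only [List.mem_range, List.length_append, List.length_singleton] at hx hy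
  have hx' : x ≤ v'.length := by omega
  have hy' : y ≤ v'.length := by omega
  have := congrArg (List.idxOf c) hxy
  rw [rotate_sentinel v' c hx', rotate_sentinel v' c hy',
    indexOf_append_cons _ _ (fun h => hc (List.mem_of_mem_drop h)),
    indexOf_append_cons _ _ (fun h => hc (List.mem_of_mem_drop h)),
    List.length_drop, List.length_drop] at this
  omega

/-! #### `bwt` as a `map` -/

private lemma filterMap_getLast?_eq_map {γ : Type*} (d : γ) :
    ∀ (L : List (List γ)), (∀ x ∈ L, x ≠ []) →
      L.filterMap List.getLast? = L.map (fun x => x.getLast?.getD d) := by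
  intro L
  induction L with
  | nil => simp
  | cons a L ih =>
    intro h
    have ha : a ≠ [] := h a List.mem_cons_self
    obtain ⟨y, hy⟩ : ∃ y, a.getLast? = some y := ⟨a.getLast ha, List.getLast?_eq_getLast ha⟩
    simp [List.filterMap_cons, hy, ih (fun x hx => h x (List.mem_cons_of_mem _ hx))]

private lemma sort_mem_ne_nil {u : List β} (hu : u ≠ []) :
    ∀ z ∈ (rotations u).insertionSort (· ≤ ·), z ≠ [] := by
  intro z hz h0
  have hmem : z ∈ rotations u := (List.perm_insertionSort _ _).subset hz
  obtain ⟨k, _, hk⟩ := exists_rotate_of_mem hmem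
  apply hu
  apply List.length_eq_zero_iff.1
  have := congrArg List.length hk
  rw [h0, List.length_rotate] at this
  exact this.symm

private lemma bwt_length (u : List β) (hu : u ≠ []) : (bwt u).length = u.length := by
  unfold bwt
  rw [filterMap_getLast?_eq_map (u.getLast hu) _ (sort_mem_ne_nil hu), List.length_map,
    (List.perm_insertionSort _ _).length_eq, length_rotations]

/-! #### The key order `klt` and standard permutations -/

private def klt {n : ℕ} (s : List β) (h : s.length = n) (p q : Fin n) : Prop :=
  s.get (Fin.cast h.symm p) < s.get (Fin.cast h.symm q) ∨
    (s.get (Fin.cast h.symm p) = s.get (Fin.cast h.symm q) ∧ p < q)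

private instance kltDec {n : ℕ} (s : List β) (h : s.length = n) (p q : Fin n) :
    Decidable (klt s h p q) := by unfold klt; infer_instance

private lemma isStdPerm_iff_klt {n : ℕ} {s : List β} {σ : Equiv.Perm (Fin n)} :
    IsStdPerm s σ ↔ ∃ h : s.length = n, ∀ p q, σ p < σ q ↔ klt s h p q := Iff.rfl

private lemma klt_total {n : ℕ} (s : List β) (h : s.length = n) {p q : Fin n} (hne : p ≠ q) :
    klt s h p q ∨ klt s h q p := by
  unfold klt
  rcases lt_trichotomy (s.get (Fin.cast h.symm p)) (s.get (Fin.cast h.symm q)) with h1 | h1 | h1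
  · exact Or.inl (Or.inl h1)
  · rcases lt_or_gt_of_ne (show p ≠ q from hne) with h2 | h2
    · exact Or.inl (Or.inr ⟨h1, h2⟩)
    · exact Or.inr (Or.inr ⟨h1.symm, h2⟩)
  · exact Or.inr (Or.inl h1)

private lemma stdperm_of_forward {n : ℕ} {s : List β} (h : s.length = n) {σ : Equiv.Perm (Fin n)}
    (fwd : ∀ p q, klt s h p q → σ p < σ q) : ∀ p q, σ p < σ q ↔ klt s h p q := by
  intro p q
  constructor
  · intro hlt
    rcases eq_or_ne p q with rfl | hne
    · exact absurd hlt (lt_irrefl _)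
    · rcases klt_total s h hne with hk | hk
      · exact hk
      · exact absurd (fwd _ _ hk) (lt_asymm hlt)
  · exact fwd p q

private lemma rank_eq {n : ℕ} {s : List β} {σ : Equiv.Perm (Fin n)} (h : s.length = n)
    (hσ : ∀ p q, σ p < σ q ↔ klt s h p q) (p : Fin n) :
    (σ p : ℕ) = ((Finset.univ : Finset (Fin n)).filter (fun q => klt s h q p)).card := by
  have h1 : ((Finset.univ : Finset (Fin n)).filter (fun q => klt s h q p)) =
      (Finset.univ.filter fun q => σ q < σ p) := by
    ext q; simp [hσ]
  have h2 : (Finset.univ.filter fun q : Fin n => σ q < σ p).card =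
      (Finset.univ.filter fun q : Fin n => q < σ p).card :=
    Finset.card_equiv σ (by intro q; simp)
  have h3 : (Finset.univ.filter fun q : Fin n => q < σ p) = Finset.Iio (σ p) := by
    ext q; simp
  rw [h1, h2, h3, Fin.card_Iio]

/-! #### The standard permutation of a BWT is cyclic -/

private lemma exists_bwt_perm (u : List β) (hu : u ≠ []) (hnd : (rotations u).Nodup)
    {m : ℕ} (hm : u.length = m) :
    ∃ ρ : Equiv.Perm (Fin m), IsStdPerm (bwt u) ρ ∧
      ∀ E : Set (Fin m), E.Nonempty → ρ '' E = E → E = Set.univ := by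
  letI : BEq (List β) := instBEqOfDecidableEq
  set sorted := (rotations u).insertionSort (· ≤ ·) with hsorteddef
  have hperm : sorted ~ rotations u := List.perm_insertionSort _ _
  have hslen : sorted.length = m := by rw [hperm.length_eq, length_rotations, hm]
  have hm0 : 0 < m := hm ▸ List.length_pos_iff.2 hu
  have hmemrot : ∀ z ∈ sorted, z ∈ rotations u := fun z hz => hperm.subset hz
  have hmemsorted : ∀ z ∈ rotations u, z ∈ sorted := fun z hz => hperm.mem_iff.2 hz
  have hndS : sorted.Nodup := hperm.nodup_iff.2 hnd
  have hstrict : sorted.Pairwise (· < ·) :=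
    ((List.pairwise_insertionSort _ _).and hndS).imp (fun h => lt_of_le_of_ne h.1 h.2)
  set d := u.getLast hu with hd
  have hbwt : bwt u = sorted.map (fun x => x.getLast?.getD d) :=
    filterMap_getLast?_eq_map d _ (sort_mem_ne_nil hu)
  have hblen : (bwt u).length = m := by rw [hbwt, List.length_map, hslen]
  -- the sorted rotations, indexed by `Fin m`
  set S : Fin m → List β := fun k => sorted.get (Fin.cast hslen.symm k) with hSdef
  have hSmem : ∀ k, S k ∈ sorted := fun k => List.get_mem _ _
  have hSlen : ∀ k, (S k).length = m := by
    intro k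
    obtain ⟨t, _, ht⟩ := exists_rotate_of_mem (hmemrot _ (hSmem k))
    rw [ht, List.length_rotate, hm]
  have hSne : ∀ k, S k ≠ [] := fun k => sort_mem_ne_nil hu _ (hSmem k)
  set g : Fin m → β := fun k => (S k).getLast (hSne k) with hgdef
  have hbget : ∀ k : Fin m, (bwt u).get (Fin.cast hblen.symm k) = g k := by
    intro k
    have hk : (k : ℕ) < (bwt u).length := by rw [hblen]; exact k.isLt
    have e1 : (bwt u).get (Fin.cast hblen.symm k) = (bwt u)[(k : ℕ)] := rfl
    have e2 := List.getElem_of_eq hbwt hk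
    have e3 : sorted[(k : ℕ)]'(by rw [hslen]; exact k.isLt) = S k := rfl
    rw [e1, e2, List.getElem_map, e3, List.getLast?_eq_getLast (hSne k)]
    rfl
  have hSinj : Function.Injective S := by
    intro k l h
    have h2 := List.nodup_iff_injective_get.1 hndS h
    have h3 := congrArg Fin.val h2
    simp only [Fin.coe_cast] at h3
    exact Fin.ext h3
  have hSltmono : ∀ {k l : Fin m}, k < l → S k < S l := by
    intro k l h
    have hv : (k : ℕ) < (l : ℕ) := h
    exact hstrict.rel_get_of_lt hv
  have hlt_of_Slt : ∀ {k l : Fin m}, S k < S l → k < l := by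
    intro k l h
    rcases lt_trichotomy k l with h1 | h1 | h1
    · exact h1
    · subst h1; exact absurd h (lt_irrefl _)
    · exact absurd (hSltmono h1) (lt_asymm h)
  -- rotation of a sorted element stays among the sorted elements
  have hmemS : ∀ (k : Fin m) (t : ℕ), (S k).rotate t ∈ sorted := by
    intro k t
    obtain ⟨j, _, hjeq⟩ := exists_rotate_of_mem (hmemrot _ (hSmem k))
    rw [hjeq, List.rotate_rotate]
    exact hmemsorted _ (rotate_mem_rotations u hu _)
  -- the permutation
  have hidxlt : ∀ k : Fin m, sorted.idxOf ((S k).rotate (m - 1)) < m := fun k =>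
    lt_of_lt_of_le (List.idxOf_lt_length_iff.2 (hmemS k (m - 1))) (le_of_eq hslen)
  set ρf : Fin m → Fin m := fun k => ⟨sorted.idxOf ((S k).rotate (m - 1)), hidxlt k⟩
    with hρfdef
  have hSρ : ∀ k, S (ρf k) = (S k).rotate (m - 1) := by
    intro k
    exact List.getElem_idxOf (by rw [hslen]; exact hidxlt k)
  have hrotundo : ∀ (z : List β), z.length = m → (z.rotate (m - 1)).rotate 1 = z := by
    intro z hz
    rw [List.rotate_rotate]
    have : m - 1 + 1 = z.length := by omega
    rw [this, List.rotate_length]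
  have hρinj : Function.Injective ρf := by
    intro k l h
    have h1 : S (ρf k) = S (ρf l) := by rw [h]
    rw [hSρ, hSρ] at h1
    have h2 := congrArg (fun z => List.rotate z 1) h1
    rw [hrotundo _ (hSlen k), hrotundo _ (hSlen l)] at h2
    exact hSinj h2
  set ρ : Equiv.Perm (Fin m) := Equiv.ofBijective ρf (Finite.injective_iff_bijective.1 hρinj)
    with hρdef
  have hρapp : ∀ k, ρ k = ρf k := fun _ => rfl
  -- the rotation of a word of length m by m-1 is last :: dropLast
  have hrot1 : ∀ k, (S k).rotate (m - 1) = g k :: (S k).dropLast := by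
    intro k
    have hl : (S k).length = m := hSlen k
    rw [List.rotate_eq_drop_append_take (by omega)]
    have h1 : (S k).drop (m - 1) = [g k] := by
      conv_lhs => rw [← List.dropLast_append_getLast (hSne k)]
      rw [List.drop_left' (by rw [List.length_dropLast, hl])]
    have h2 : (S k).take (m - 1) = (S k).dropLast := by
      rw [List.dropLast_eq_take, hl]
    rw [h1, h2, List.singleton_append]
  have hdrop : ∀ k, S k = (S k).dropLast ++ [g k] :=
    fun k => (List.dropLast_append_getLast (hSne k)).symm
  -- forward direction of the standard-permutation property
  have hfwd : ∀ p q : Fin m, klt (bwt u) hblen p q → ρ p < ρ q := by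
    intro p q hk
    unfold klt at hk
    rw [hbget p, hbget q] at hk
    apply hlt_of_Slt
    show S (ρf p) < S (ρf q)
    rw [hSρ, hSρ, hrot1, hrot1]
    rcases hk with hlt | ⟨heq, hpq⟩
    · exact List.Lex.rel hlt
    · rw [heq]
      apply List.Lex.cons
      apply lex_of_append_singleton (c := g q)
        (by rw [List.length_dropLast, List.length_dropLast, hSlen, hSlen])
      have h1 : S p < S q := hSltmono hpq
      rw [hdrop p, hdrop q, heq] at h1
      exact h1
  have hstd : IsStdPerm (bwt u) ρ :=
    isStdPerm_iff_klt.2 ⟨hblen, stdperm_of_forward hblen hfwd⟩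
  refine ⟨ρ, hstd, ?_⟩
  -- cyclicity
  have hiter : ∀ (t : ℕ) (k : Fin m), S (ρf^[t] k) = (S k).rotate (t * (m - 1)) := by
    intro t
    induction t with
    | zero => intro k; simp
    | succ t ih =>
      intro k
      rw [Function.iterate_succ_apply', hSρ, ih, List.rotate_rotate]
      congr 1
      ring
  have hrotmod : ∀ (k : Fin m) (a b : ℕ), a % m = b % m → (S k).rotate a = (S k).rotate b := by
    intro k a b h
    rw [← List.rotate_mod, hSlen, h, ← hSlen k, List.rotate_mod]
  intro E hEne hEim
  obtain ⟨x, hx⟩ := hEne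
  have hEcl : ∀ y ∈ E, ρf y ∈ E := by
    intro y hy
    have : ρ y ∈ ρ '' E := Set.mem_image_of_mem _ hy
    rw [hEim] at this
    exact this
  have hiterE : ∀ t, ρf^[t] x ∈ E := by
    intro t
    induction t with
    | zero => exact hx
    | succ t ih => rw [Function.iterate_succ_apply']; exact hEcl _ ih
  ext y
  simp only [Set.mem_univ, iff_true]
  obtain ⟨kx, hkx, hxeq⟩ := exists_rotate_of_mem (hmemrot _ (hSmem x))
  obtain ⟨ky, hky, hyeq⟩ := exists_rotate_of_mem (hmemrot _ (hSmem y))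
  rw [hm] at hkx hky
  set dd := (m - kx) + ky with hdd
  have hxy : (S x).rotate dd = S y := by
    rw [hxeq, hyeq, List.rotate_rotate]
    have h1 : kx + dd = m + ky := by omega
    rw [h1]
    conv_lhs => rw [← List.rotate_mod]
    conv_rhs => rw [← List.rotate_mod]
    rw [hm]
    congr 1
    exact Nat.add_mod_left m ky
  set t := dd * (m - 1) with ht
  have hmod : (t * (m - 1)) % m = dd % m := by
    obtain ⟨m', rfl⟩ : ∃ m', m = m' + 1 := ⟨m - 1, by omega⟩
    have key : t * m' + (m' + 1) * dd = dd + (m' + 1) * t := by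
      simp only [ht, Nat.add_sub_cancel]
      ring
    calc (t * (m' + 1 - 1)) % (m' + 1) = (t * m') % (m' + 1) := by
          rw [Nat.add_sub_cancel]
      _ = (t * m' + (m' + 1) * dd) % (m' + 1) := (Nat.add_mul_mod_self_left _ _ _).symm
      _ = (dd + (m' + 1) * t) % (m' + 1) := by rw [key]
      _ = dd % (m' + 1) := Nat.add_mul_mod_self_left _ _ _
  have hfin : S (ρf^[t] x) = S y := by
    rw [hiter, hrotmod x _ dd hmod, hxy]
  have := hSinj hfin
  rw [← this]
  exact hiterE t
end Statement18Aux

section Statement18Agree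

open List

variable {α : Type*} [LinearOrder α]

private lemma coe_list_eq (v : List α) :
    (v.map (fun a => (a : WithBot α)) : List (WithBot α)) = v.map WithBot.some := by
  induction v with
  | nil => rfl
  | cons a v ih => simpa using ih

private lemma dol_eq (w : List α) (i : ℕ) :
    dol w i = (w.map WithBot.some).insertIdx (i - 1) ⊥ := by
  unfold dol
  rw [coe_list_eq]

private lemma dol_getElem_bot (w : List α) {a : ℕ} (ha : a - 1 ≤ w.length)
    (h : a - 1 < (dol w a).length) : (dol w a)[a-1] = (⊥ : WithBot α) := by
  rw [List.getElem_of_eq (dol_eq w a) h]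
  exact List.getElem_insertIdx_self _

private lemma dol_getElem_lt (w : List α) {a q : ℕ} (hq : q < a - 1) (hqn : q < w.length)
    (h : q < (dol w a).length) : (dol w a)[q] = WithBot.some (w[q]'hqn) := by
  rw [List.getElem_of_eq (dol_eq w a) h,
    List.getElem_insertIdx_of_lt hq,
    List.getElem_map]

private lemma dol_getElem_gt (w : List α) {a q : ℕ} (hq : a - 1 < q) (hqn : q ≤ w.length)
    (h : q < (dol w a).length) (hb : q - 1 < w.length) :
    (dol w a)[q] = WithBot.some (w[q-1]'hb) := by
  obtain ⟨k, rfl⟩ : ∃ k, q = (a - 1) + k + 1 := ⟨q - (a - 1) - 1, by omega⟩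
  rw [List.getElem_of_eq (dol_eq w a) h,
    List.getElem_insertIdx_add_succ _ _ _ _ (by rw [List.length_map]; omega),
    List.getElem_map]
  exact congrArg _ (getElem_idx_eq (by omega) hb).symm

private lemma dol_length_eq (w : List α) {a : ℕ} (ha : a ≤ w.length + 1) :
    (dol w a).length = w.length + 1 := by
  rw [dol_eq, List.length_insertIdx_of_le_length (by rw [List.length_map]; omega), List.length_map]

private lemma stdPerm_agree (w : List α) {a b : ℕ} (ha : 1 ≤ a) (hab : a ≤ b)
    (hb : b ≤ w.length + 1) {σa σb : Equiv.Perm (Fin (w.length + 1))}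
    (hA : IsStdPerm (dol w a) σa) (hB : IsStdPerm (dol w b) σb)
    (p : Fin (w.length + 1)) (hp : (p : ℕ) + 1 < a ∨ b < (p : ℕ) + 1) : σa p = σb p := by
  classical
  obtain ⟨hla, hkA⟩ := isStdPerm_iff_klt.1 hA
  obtain ⟨hlb, hkB⟩ := isStdPerm_iff_klt.1 hB
  have hpn : (p : ℕ) < w.length + 1 := p.isLt
  -- the reindexing map
  set νf : Fin (w.length + 1) → Fin (w.length + 1) := fun q =>
    if (q : ℕ) = a - 1 then ⟨b - 1, by omega⟩
    else if (q : ℕ) ≤ b - 1 ∧ a - 1 < (q : ℕ) then ⟨(q : ℕ) - 1, by omega⟩ else q with hνdef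
  have hνval : ∀ q : Fin (w.length + 1), ((νf q : ℕ)) =
      if (q : ℕ) = a - 1 then b - 1
      else if (q : ℕ) ≤ b - 1 ∧ a - 1 < (q : ℕ) then (q : ℕ) - 1 else (q : ℕ) := by
    intro q
    simp only [hνdef]
    split_ifs <;> rfl
  have hνinj : Function.Injective νf := by
    intro q r h
    have hq := q.isLt
    have hr := r.isLt
    have hval := congrArg Fin.val h
    rw [hνval q, hνval r] at hval
    apply Fin.ext
    split_ifs at hval <;> omega
  have hνchar : ∀ q : Fin (w.length + 1),
      (dol w b).get (Fin.cast hlb.symm (νf q)) = (dol w a).get (Fin.cast hla.symm q) := by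
    intro q
    have hq := q.isLt
    simp only [List.get_eq_getElem, Fin.coe_cast]
    by_cases h1 : (q : ℕ) = a - 1
    · have hv : ((νf q : ℕ)) = b - 1 := by rw [hνval q, if_pos h1]
      rw [getElem_idx_eq hv, getElem_idx_eq h1,
        dol_getElem_bot w (by omega), dol_getElem_bot w (by omega)]
    · by_cases h2 : (q : ℕ) ≤ b - 1 ∧ a - 1 < (q : ℕ)
      · have hv : ((νf q : ℕ)) = (q : ℕ) - 1 := by rw [hνval q, if_neg h1, if_pos h2]
        rw [getElem_idx_eq hv,
          dol_getElem_lt w (a := b) (by omega) (by omega),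
          dol_getElem_gt w (a := a) (by omega) (by omega) _ (by omega)]
      · have hv : ((νf q : ℕ)) = (q : ℕ) := by rw [hνval q, if_neg h1, if_neg h2]
        rw [getElem_idx_eq hv]
        rcases (by omega : (q : ℕ) < a - 1 ∨ b - 1 < (q : ℕ)) with h3 | h3
        · rw [dol_getElem_lt w (a := b) (by omega) (by omega),
            dol_getElem_lt w (a := a) (by omega) (by omega)]
        · rw [dol_getElem_gt w (a := b) (by omega) (by omega) _ (by omega),
            dol_getElem_gt w (a := a) (by omega) (by omega) _ (by omega)]
  have hνfix : νf p = p := by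
    apply Fin.ext
    rw [hνval p]
    split_ifs <;> omega
  have hgp : (dol w b).get (Fin.cast hlb.symm p) = (dol w a).get (Fin.cast hla.symm p) := by
    have := hνchar p
    rwa [hνfix] at this
  have hbotp : (dol w a).get (Fin.cast hla.symm p) ≠ ⊥ := by
    simp only [List.get_eq_getElem, Fin.coe_cast]
    rcases hp with h | h
    · rw [dol_getElem_lt w (by omega) (by omega)]
      exact WithBot.coe_ne_bot
    · rw [dol_getElem_gt w (by omega) (by omega) _ (by omega)]
      exact WithBot.coe_ne_bot

  have hval : ∀ q : Fin (w.length + 1),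
      (dol w a).get (Fin.cast hla.symm q) = (dol w a).get (Fin.cast hla.symm p) →
      (((νf q : ℕ)) < (p : ℕ) ↔ (q : ℕ) < (p : ℕ)) := by
    intro q heq
    have hq := q.isLt
    have hqne : (q : ℕ) ≠ a - 1 := by
      intro hqa
      apply hbotp
      rw [← heq]
      simp only [List.get_eq_getElem, Fin.coe_cast]
      rw [getElem_idx_eq hqa]
      exact dol_getElem_bot w (by omega) (by omega)
    rw [hνval q, if_neg hqne]
    split_ifs with h2 <;> omega
  have hν_klt : ∀ q : Fin (w.length + 1),
      klt (dol w a) hla q p ↔ klt (dol w b) hlb (νf q) p := by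
    intro q
    unfold klt
    constructor
    · rintro (hlt | ⟨heq, hqp⟩)
      · exact Or.inl (by rw [hνchar q, hgp]; exact hlt)
      · refine Or.inr ⟨by rw [hνchar q, hgp]; exact heq, ?_⟩
        exact Fin.lt_def.2 ((hval q heq).2 (Fin.lt_def.1 hqp))
    · rintro (hlt | ⟨heq, hqp⟩)
      · rw [hνchar q, hgp] at hlt
        exact Or.inl hlt
      · rw [hνchar q, hgp] at heq
        exact Or.inr ⟨heq, Fin.lt_def.2 ((hval q heq).1 (Fin.lt_def.1 hqp))⟩
  apply Fin.ext
  rw [rank_eq hla hkA p, rank_eq hlb hkB p]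
  exact Finset.card_equiv (Equiv.ofBijective νf (Finite.injective_iff_bijective.1 hνinj))
    (by intro q; simp only [Finset.mem_filter, Finset.mem_univ, true_and,
      Equiv.ofBijective_apply]; exact hν_klt q)

private lemma dol_zero_eq_one (w : List α) : dol w 0 = dol w 1 := rfl

end Statement18Agree


/-- Let `C` be a cycle of `σ_i` (1-based elements `x+1` for `x ∈ C`).
If `i < min C` then no position `j ≤ i` is nice for `w`, and if `i > max C` then no
position `j ≥ i` is nice for `w`. -/
theorem statement_18 {α : Type*} [LinearOrder α] [Fintype α] (w : List α) (i : ℕ)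
    (h1 : 1 ≤ i) (h2 : i ≤ w.length + 1)
    (σi : Equiv.Perm (Fin (w.length + 1))) (hσi : IsStdPerm (dol w i) σi)
    (C : Set (Fin (w.length + 1))) (hC : IsCycleOf σi C) :
    ((∀ x ∈ C, i < (x : ℕ) + 1) → ∀ j : ℕ, j ≤ i → ¬ Nice w j) ∧
    ((∀ x ∈ C, (x : ℕ) + 1 < i) → ∀ j : ℕ, i ≤ j → ¬ Nice w j) := by
  classical
  constructor
  · rintro hCgt j hji ⟨v, hvlen, hbwt⟩
    rw [coe_list_eq] at hbwt
    set u := v.map WithBot.some ++ [(⊥ : WithBot α)] with hu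
    have hune : u ≠ [] := by simp [hu]
    have hulen : u.length = w.length + 1 := by simp [hu, hvlen]
    have hnd : (rotations u).Nodup := rotations_nodup_of_sentinel _ _ (by simp)
    obtain ⟨ρ, hρstd, hcyc⟩ := exists_bwt_perm u hune hnd hulen
    rw [hbwt] at hρstd
    have hdol : dol w j = dol w (max 1 j) := by
      rcases Nat.eq_zero_or_pos j with rfl | hj
      · exact dol_zero_eq_one w
      · rw [Nat.max_eq_right hj]
    rw [hdol] at hρstd
    have hagree : ∀ p ∈ C, ρ p = σi p := fun p hp =>
      stdPerm_agree w (a := max 1 j) (b := i) (le_max_left _ _) (by omega) h2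
        hρstd hσi p (Or.inr (hCgt p hp))
    have hCinv : ρ '' C = C := by
      rw [Set.image_congr hagree]
      exact hC.2.1
    have hCuniv := hcyc C hC.1 hCinv
    have h0 : (⟨0, by omega⟩ : Fin (w.length + 1)) ∈ C := hCuniv ▸ Set.mem_univ _
    have := hCgt _ h0
    simp only at this
    omega
  · rintro hClt j hij ⟨v, hvlen, hbwt⟩
    rw [coe_list_eq] at hbwt
    set u := v.map WithBot.some ++ [(⊥ : WithBot α)] with hu
    have hune : u ≠ [] := by simp [hu]
    have hulen : u.length = w.length + 1 := by simp [hu, hvlen]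
    have hnd : (rotations u).Nodup := rotations_nodup_of_sentinel _ _ (by simp)
    obtain ⟨ρ, hρstd, hcyc⟩ := exists_bwt_perm u hune hnd hulen
    have hjle : j ≤ w.length + 1 := by
      by_contra hj
      have hlen : (dol w j).length = w.length := by
        rw [dol_eq, List.insertIdx_of_length_lt (by rw [List.length_map]; omega),
          List.length_map]
      rw [← hbwt, bwt_length u hune, hulen] at hlen
      omega
    rw [hbwt] at hρstd
    have hagree : ∀ p ∈ C, ρ p = σi p := fun p hp =>
      (stdPerm_agree w (a := i) (b := j) h1 hij hjle hσi hρstd p (Or.inl (hClt p hp))).symm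
    have hCinv : ρ '' C = C := by
      rw [Set.image_congr hagree]
      exact hC.2.1
    have hCuniv := hcyc C hC.1 hCinv
    have hlast : (⟨w.length, by omega⟩ : Fin (w.length + 1)) ∈ C := hCuniv ▸ Set.mem_univ _
    have := hClt _ hlast
    simp only at this
    omega


end DollarBWT
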